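/- Let p be a prime and let (a,b,c), (a',b',c') be two distinct triples of vectors in 𝔽_p^n with a+b+c = a'+b'+c' = t. Then the (n+2)×6 matrix over 𝔽_p whose columns are (0,1,a), (0,1,a'), (1/2,1/2,(t−b)/2), (1/2,1/2,(t−b')/2), (1,0,c), (1,0,c') has rank at least 3. -/

import Mathlib

lemma rank_ge_of_cols {K : Type*} [Field K] {m n : Type*} [Fintype m] [Fintype n]
    [DecidableEq n] (A : Matrix m n K) {k : ℕ} (f : Fin k → n)
    (h : LinearIndependent K (fun j => (fun i => A i (f j)))) : k ≤ A.rank := by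
  rw [Matrix.rank]
  have hmem : ∀ j, (fun i => A i (f j)) ∈ LinearMap.range A.mulVecLin := by
    intro j
    exact ⟨Pi.single (f j) 1, by simp [Matrix.mulVecLin, Matrix.mulVec_single]; rfl⟩
  let w : Fin k → LinearMap.range A.mulVecLin := fun j => ⟨_, hmem j⟩
  have hw : LinearIndependent K w := by
    apply LinearIndependent.of_comp (LinearMap.range A.mulVecLin).subtype
    exact h
  simpa using hw.fintype_card_le_finrank

/-- Let `p` be an odd prime and `(a,b,c) ≠ (a',b',c')` triples of vectors in `𝔽_p^n`
with `a+b+c = a'+b'+c' = t`. Then the `(n+2)×6` matrix with columns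
`(0,1,a), (0,1,a'), (1/2,1/2,(t−b)/2), (1/2,1/2,(t−b')/2), (1,0,c), (1,0,c')`
has rank at least 3. -/
theorem stmt_12 (p : ℕ) [hp : Fact p.Prime] (hodd : p ≠ 2) (n : ℕ)
    (a b c a' b' c' t : Fin n → ZMod p)
    (h1 : a + b + c = t) (h2 : a' + b' + c' = t)
    (hne : (a, b, c) ≠ (a', b', c')) :
    3 ≤ (Matrix.of fun (i : Fin (n + 2)) (j : Fin 6) =>
      ![Fin.cons (0 : ZMod p) (Fin.cons 1 a),
        Fin.cons (0 : ZMod p) (Fin.cons 1 a'),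
        Fin.cons ((1 : ZMod p) / 2) (Fin.cons ((1 : ZMod p) / 2) fun i => (t i - b i) / 2),
        Fin.cons ((1 : ZMod p) / 2) (Fin.cons ((1 : ZMod p) / 2) fun i => (t i - b' i) / 2),
        Fin.cons (1 : ZMod p) (Fin.cons 0 c),
        Fin.cons (1 : ZMod p) (Fin.cons 0 c')] j i).rank := by
  have hcase : a ≠ a' ∨ c ≠ c' := by
    by_contra hcon
    push_neg at hcon
    obtain ⟨ha, hc⟩ := hcon
    apply hne
    have hb : b = b' := by
      have := h1.trans h2.symm
      rw [ha, hc] at this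
      have : a' + b + c' = a' + b' + c' := this
      simpa using (add_right_cancel (add_left_cancel (by rwa [add_assoc, add_assoc] at this)))
    simp [ha, hb, hc]
  rcases hcase with hd | hd
  · obtain ⟨i0, hi0⟩ := Function.ne_iff.mp hd
    apply rank_ge_of_cols _ ![0, 1, 4]
    rw [Fintype.linearIndependent_iff]
    intro g hg j
    have e0 := congrFun hg 0
    have e1 := congrFun hg 1
    have e2 := congrFun hg i0.succ.succ
    simp [Fin.sum_univ_three, Fin.cons_succ, Matrix.cons_val_succ] at e0 e1 e2
    -- e0 : g 2 = 0 essentially; e1 : g 0 + g 1 = 0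
    have hg2 : g 2 = 0 := by linear_combination e0
    have hg01 : g 0 + g 1 = 0 := by linear_combination e1
    have key : g 0 * (a i0 - a' i0) = 0 := by linear_combination e2 - a' i0 * e1 - c i0 * e0
    have hg0 : g 0 = 0 := by
      rcases mul_eq_zero.mp key with h | h
      · exact h
      · exact absurd (sub_eq_zero.mp h) hi0
    have hg1 : g 1 = 0 := by linear_combination e1 - hg0
    fin_cases j <;> assumption
  · obtain ⟨i0, hi0⟩ := Function.ne_iff.mp hd
    apply rank_ge_of_cols _ ![0, 4, 5]
    rw [Fintype.linearIndependent_iff]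
    intro g hg j
    have e0 := congrFun hg 0
    have e1 := congrFun hg 1
    have e2 := congrFun hg i0.succ.succ
    simp [Fin.sum_univ_three, Fin.cons_succ, Matrix.cons_val_succ, show (5:Fin 6) = Fin.succ 4 from rfl, show (4:Fin 6) = Fin.succ 3 from rfl, Matrix.vecHead, Matrix.vecTail] at e0 e1 e2
    have key : g 1 * (c i0 - c' i0) = 0 := by linear_combination e2 - c' i0 * e0 - a i0 * e1
    have hg1 : g 1 = 0 := by
      rcases mul_eq_zero.mp key with h | h
      · exact h
      · exact absurd (sub_eq_zero.mp h) hi0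
    have hg2 : g 2 = 0 := by linear_combination e0 - hg1
    fin_cases j <;> assumption
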